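/- arXiv:2605.30146 — 3 statements merged into one kernel-verified Lean document; each statement's English description precedes it below -/
import Mathlib

section
/- Let K : ℝ^m × ℝ^m → ℂ be measurable and satisfy the symmetry condition K(p,q) = conj(K(−p,−q)) for all p, q ∈ ℝ^m, let f : ℝ^m → ℂ be measurable, and define g : ℝ^m → ℂ by g(p) := conj(f(−p)) − i·𝔣·|p|². Then the forward maps coincide: F(g)(x,y) = F(f)(x,y) for all x, y ∈ ℝ^m (non-uniqueness of the phase retrieval problem caused by twisted symmetry). -/
open MeasureTheory Complex

noncomputable section

/-- `ℝ^m` with its Euclidean structure. -/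
abbrev Em (m : ℕ) := EuclideanSpace ℝ (Fin m)

/-- The chirp function `n_𝔣(x) = exp(i·𝔣·|x|²/2)`. -/
def chirp (m : ℕ) (fr : ℝ) (x : Em m) : ℂ :=
  Complex.exp (Complex.I * fr * (‖x‖ : ℂ) ^ 2 / 2)

/-- The twisted kernel
`K_f(p,q) = 𝔣^m · n_𝔣(p) · e^{f(p)} · K(p,q) · e^{conj(f(q))} · conj(n_𝔣(q))`. -/
def kerF (m : ℕ) (fr : ℝ) (K : Em m → Em m → ℂ) (f : Em m → ℂ) (p q : Em m) : ℂ :=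
  (fr : ℂ) ^ m * chirp m fr p * Complex.exp (f p) * K p q *
    Complex.exp ((starRingEnd ℂ) (f q)) * (starRingEnd ℂ) (chirp m fr q)

/-- The unitary Fourier transform on `ℝ^{2m} = ℝ^m × ℝ^m`,
`𝓕_{2m}(Φ)(ξ,η) = (2π)^{-m} ∫∫ Φ(p,q)·exp(-i(⟨ξ,p⟩+⟨η,q⟩)) dp dq`. -/
def FT2m (m : ℕ) (Φ : Em m → Em m → ℂ) (ξ η : Em m) : ℂ :=
  (((2 * Real.pi) ^ m : ℝ) : ℂ)⁻¹ *
    ∫ p : Em m, ∫ q : Em m,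
      Φ p q * Complex.exp (-Complex.I * ((inner ℝ ξ p : ℝ) + (inner ℝ η q : ℝ)))

/-- The forward map `F(f)(x,y) = |𝓕_{2m}(K_f)(𝔣x, −𝔣y)|²`. -/
def FwdF (m : ℕ) (fr : ℝ) (K : Em m → Em m → ℂ) (f : Em m → ℂ) (x y : Em m) : ℝ :=
  ‖FT2m m (kerF m fr K f) (fr • x) (-(fr • y))‖ ^ 2

lemma aux_exp (c x : ℂ) {A B C D A' B' C' D' : ℂ} (h : A + B + C + D = A' + B' + C' + D') :
    c * Complex.exp A * Complex.exp B * x * Complex.exp C * Complex.exp D =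
    c * Complex.exp A' * Complex.exp B' * x * Complex.exp C' * Complex.exp D' := by
  have key : ∀ A B C D : ℂ, c * Complex.exp A * Complex.exp B * x * Complex.exp C * Complex.exp D
      = c * x * Complex.exp (A + B + C + D) := by
    intro A B C D
    rw [Complex.exp_add, Complex.exp_add, Complex.exp_add]; ring
  rw [key, key, h]

/-- Non-uniqueness of the phase retrieval problem caused by twisted symmetry:
if `K(p,q) = conj(K(-p,-q))` and `g(p) = conj(f(-p)) − i·𝔣·|p|²`, then
`F(g) = F(f)`. -/
theorem nonuniqueness_twisted_symmetry {m : ℕ} (hm : 1 ≤ m) (fr : ℝ) (hfr : 0 < fr)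
    (K : Em m → Em m → ℂ)
    (hKmeas : Measurable fun pq : Em m × Em m => K pq.1 pq.2)
    (hK : ∀ p q : Em m, K p q = (starRingEnd ℂ) (K (-p) (-q)))
    (f : Em m → ℂ) (hf : Measurable f)
    (g : Em m → ℂ)
    (hg : ∀ p : Em m, g p = (starRingEnd ℂ) (f (-p)) - Complex.I * fr * (‖p‖ : ℂ) ^ 2) :
    ∀ x y : Em m, FwdF m fr K g x y = FwdF m fr K f x y := by
  have hker : ∀ p q : Em m, kerF m fr K g p q = (starRingEnd ℂ) (kerF m fr K f (-p) (-q)) := by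
    intro p q
    simp only [kerF, chirp, norm_neg, map_mul, map_pow, Complex.conj_ofReal,
      ← Complex.exp_conj, Complex.conj_conj, ← hK]
    apply aux_exp
    simp only [hg, map_sub, map_mul, map_pow, map_div₀, Complex.conj_I,
      Complex.conj_ofReal, Complex.conj_conj, map_ofNat]
    ring
  have key : ∀ ξ η : Em m, FT2m m (kerF m fr K g) ξ η
      = (starRingEnd ℂ) (FT2m m (kerF m fr K f) ξ η) := by
    intro ξ η
    unfold FT2m
    have h1 : ∀ p q : Em m,
        kerF m fr K g p q * Complex.exp (-Complex.I * ((inner ℝ ξ p : ℝ) + (inner ℝ η q : ℝ)))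
        = (starRingEnd ℂ) (kerF m fr K f (-p) (-q) *
            Complex.exp (-Complex.I * ((inner ℝ ξ (-p) : ℝ) + (inner ℝ η (-q) : ℝ)))) := by
      intro p q
      rw [map_mul, hker p q]
      congr 1
      rw [← Complex.exp_conj]
      congr 1
      simp only [map_mul, map_add, map_neg, Complex.conj_I, Complex.conj_ofReal,
        inner_neg_right]
      push_cast
      ring
    simp_rw [h1, integral_conj]
    rw [show (∫ p : Em m, ∫ q : Em m, kerF m fr K f (-p) (-q) *
        Complex.exp (-Complex.I * ((inner ℝ ξ (-p) : ℝ) + (inner ℝ η (-q) : ℝ))))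
        = ∫ p : Em m, ∫ q : Em m, kerF m fr K f p q *
        Complex.exp (-Complex.I * ((inner ℝ ξ p : ℝ) + (inner ℝ η q : ℝ))) from by
      rw [← integral_neg_eq_self (fun p : Em m => ∫ q : Em m, kerF m fr K f p q *
        Complex.exp (-Complex.I * ((inner ℝ ξ p : ℝ) + (inner ℝ η q : ℝ)))) volume]
      congr 1; funext p
      exact (integral_neg_eq_self (fun q : Em m => kerF m fr K f (-p) q *
        Complex.exp (-Complex.I * ((inner ℝ ξ (-p) : ℝ) + (inner ℝ η q : ℝ)))) volume)]
    rw [map_mul, map_inv₀, Complex.conj_ofReal]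
  intro x y
  unfold FwdF
  rw [key, Complex.norm_conj]

end
end

section
/- Let K : ℝ^m × ℝ^m → ℂ be continuous with compact support and let f₁, f₂ : ℝ^m → ℂ be bounded measurable. Set K_sum := K_{f₁} + K_{f₂} and K_diff := K_{f₁} − K_{f₂}, viewed as integrable functions on ℝ^{2m}. Then for all x, y ∈ ℝ^m, F(f₁)(x,y) − F(f₂)(x,y) = (2π)^(−m) · Re( 𝓕_{2m}( conj(K_sum(−·)) ⋆ K_diff )(𝔣x, −𝔣y) ), where ⋆ denotes convolution on ℝ^{2m}, i.e. (a ⋆ b)(z) = ∫_{ℝ^{2m}} a(z − w)·b(w) dw, and conj(K_sum(−·)) denotes the function z ↦ conj(K_sum(−z)). -/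
open MeasureTheory Complex

noncomputable section

/-- Convolution on `ℝ^{2m} = ℝ^m × ℝ^m`:
`(a ⋆ b)(z) = ∫_{ℝ^{2m}} a(z−w)·b(w) dw`. -/
def conv2m (m : ℕ) (a b : Em m → Em m → ℂ) (z₁ z₂ : Em m) : ℂ :=
  ∫ w₁ : Em m, ∫ w₂ : Em m, a (z₁ - w₁) (z₂ - w₂) * b w₁ w₂

/-! ### Auxiliary material -/

instance auxProdLeftInv (m : ℕ) : Measure.IsAddLeftInvariant (volume : Measure (Em m × Em m)) :=
  Measure.prod.instIsAddLeftInvariant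

instance auxProdNegInv (m : ℕ) : Measure.IsNegInvariant (volume : Measure (Em m × Em m)) := by
  constructor
  show Measure.map Neg.neg (volume : Measure (Em m × Em m)) = _
  have h : (Neg.neg : Em m × Em m → Em m × Em m) = Prod.map Neg.neg Neg.neg := rfl
  rw [Measure.volume_eq_prod, h,
    ← Measure.map_prod_map _ _ measurable_neg measurable_neg,
    Measure.map_neg_eq_self]

lemma chirp_abs (m : ℕ) (fr : ℝ) (x : Em m) : ‖chirp m fr x‖ = 1 := by
  rw [chirp, Complex.norm_exp]
  simp [← Complex.ofReal_pow]

lemma chirp_cont (m : ℕ) (fr : ℝ) : Continuous (chirp m fr) := by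
  unfold chirp; fun_prop

lemma kerF_norm_le (m : ℕ) (fr : ℝ) (hfr : 0 < fr) (K : Em m → Em m → ℂ) (f : Em m → ℂ)
    {C : ℝ} (hb : ∀ x, ‖f x‖ ≤ C) (p q : Em m) :
    ‖kerF m fr K f p q‖ ≤ fr ^ m * Real.exp C * Real.exp C * ‖K p q‖ := by
  have h1 : Real.exp (f p).re ≤ Real.exp C :=
    Real.exp_le_exp.2 ((Complex.re_le_norm _).trans (hb p))
  have h2 : Real.exp (f q).re ≤ Real.exp C :=
    Real.exp_le_exp.2 ((Complex.re_le_norm _).trans (hb q))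
  calc ‖kerF m fr K f p q‖
      = fr ^ m * Real.exp (f p).re * Real.exp (f q).re * ‖K p q‖ := by
        rw [kerF]
        simp [norm_mul, norm_pow, chirp_abs, Complex.norm_exp, Complex.norm_real, Real.norm_eq_abs, abs_of_pos hfr, Complex.norm_conj]
        ring
    _ ≤ fr ^ m * Real.exp C * Real.exp C * ‖K p q‖ := by gcongr

lemma kerF_meas (m : ℕ) (fr : ℝ) (K : Em m → Em m → ℂ)
    (hKcont : Continuous fun pq : Em m × Em m => K pq.1 pq.2)
    (f : Em m → ℂ) (hf : Measurable f) :
    Measurable (fun z : Em m × Em m => kerF m fr K f z.1 z.2) := by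
  have hK : Measurable fun pq : Em m × Em m => K pq.1 pq.2 := hKcont.measurable
  have hc : Measurable (chirp m fr) := (chirp_cont m fr).measurable
  have hexp : Measurable Complex.exp := Complex.continuous_exp.measurable
  have hconj : Measurable (starRingEnd ℂ) := Complex.continuous_conj.measurable
  unfold kerF
  fun_prop

lemma kerF_integrable (m : ℕ) (fr : ℝ) (hfr : 0 < fr) (K : Em m → Em m → ℂ)
    (hKcont : Continuous fun pq : Em m × Em m => K pq.1 pq.2)
    (hKsupp : HasCompactSupport fun pq : Em m × Em m => K pq.1 pq.2)
    (f : Em m → ℂ) (hf : Measurable f) {C : ℝ} (hb : ∀ x, ‖f x‖ ≤ C) :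
    Integrable (fun z : Em m × Em m => kerF m fr K f z.1 z.2) := by
  have hKint : Integrable (fun z : Em m × Em m => K z.1 z.2) :=
    hKcont.integrable_of_hasCompactSupport hKsupp
  refine ((hKint.norm.const_mul (fr ^ m * Real.exp C * Real.exp C)).mono'
    (kerF_meas m fr K hKcont f hf).aestronglyMeasurable (ae_of_all _ fun z => ?_))
  simpa [abs_of_pos hfr, mul_assoc] using
    kerF_norm_le m fr hfr K f hb z.1 z.2

def chr (m : ℕ) (ξ η : Em m) (z : Em m × Em m) : ℂ :=
  Complex.exp (-Complex.I * ((inner ℝ ξ z.1 : ℝ) + (inner ℝ η z.2 : ℝ)))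

lemma chr_abs (m : ℕ) (ξ η : Em m) (z : Em m × Em m) : ‖chr m ξ η z‖ = 1 := by
  simp [chr, Complex.norm_exp]

lemma chr_cont (m : ℕ) (ξ η : Em m) : Continuous (chr m ξ η) := by
  have h1 : Continuous fun z : Em m × Em m => ((inner ℝ ξ z.1 : ℝ) : ℂ) :=
    Complex.continuous_ofReal.comp (continuous_const.inner continuous_fst)
  have h2 : Continuous fun z : Em m × Em m => ((inner ℝ η z.2 : ℝ) : ℂ) :=
    Complex.continuous_ofReal.comp (continuous_const.inner continuous_snd)
  exact Complex.continuous_exp.comp (continuous_const.mul (h1.add h2))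

lemma chr_mul (m : ℕ) (ξ η : Em m) (z w : Em m × Em m) :
    chr m ξ η z = chr m ξ η w * (starRingEnd ℂ) (chr m ξ η (w - z)) := by
  rw [chr, chr, chr, ← Complex.exp_conj, ← Complex.exp_add]
  congr 1
  have h1 : (w - z).1 = w.1 - z.1 := rfl
  have h2 : (w - z).2 = w.2 - z.2 := rfl
  rw [h1, h2, inner_sub_right, inner_sub_right]
  simp only [map_mul, map_neg, Complex.conj_I, Complex.conj_ofReal, map_add]
  push_cast
  ring

lemma mul_chr_integrable (m : ℕ) (ξ η : Em m) {g : Em m × Em m → ℂ} (hg : Integrable g) :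
    Integrable (fun z => g z * chr m ξ η z) := by
  refine hg.norm.mono' (hg.aestronglyMeasurable.mul
    (chr_cont m ξ η).aestronglyMeasurable) (ae_of_all _ fun z => ?_)
  simp [chr_abs]

lemma FT2m_eq (m : ℕ) (Φ : Em m → Em m → ℂ) (ξ η : Em m)
    (h : Integrable (fun z : Em m × Em m => Φ z.1 z.2 * chr m ξ η z)) :
    FT2m m Φ ξ η =
      (((2 * Real.pi) ^ m : ℝ) : ℂ)⁻¹ * ∫ z : Em m × Em m, Φ z.1 z.2 * chr m ξ η z := by
  rw [FT2m]
  congr 1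
  have h' : Integrable (Function.uncurry fun p q : Em m =>
      Φ p q * chr m ξ η (p, q)) ((volume : Measure (Em m)).prod volume) := by
    rw [← Measure.volume_eq_prod]; exact h
  have h2 := integral_integral (f := fun p q : Em m => Φ p q * chr m ξ η (p, q)) h'
  rw [← Measure.volume_eq_prod] at h2
  exact h2

lemma Psi_integrable (m : ℕ) (F H : Em m × Em m → ℂ) (hF : Integrable F) (hH : Integrable H) :
    Integrable (fun p : (Em m × Em m) × (Em m × Em m) => F (p.2 - p.1) * H p.2)
      ((volume : Measure (Em m × Em m)).prod volume) := by
  have hF' : Integrable (fun u : Em m × Em m => F (-u)) := by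
    have : (fun u : Em m × Em m => F (-u)) = F ∘ Neg.neg := rfl
    rw [this]
    exact hF.comp_neg
  have := hH.convolution_integrand (ContinuousLinearMap.mul ℂ ℂ)
    (g := fun u : Em m × Em m => F (-u)) hF'
  simpa [ContinuousLinearMap.mul_apply', neg_sub, mul_comm] using this

def Fc (m : ℕ) (ξ η : Em m) (g : Em m × Em m → ℂ) (u : Em m × Em m) : ℂ :=
  (starRingEnd ℂ) (g u * chr m ξ η u)

def Hc (m : ℕ) (ξ η : Em m) (g : Em m × Em m → ℂ) (w : Em m × Em m) : ℂ :=
  g w * chr m ξ η w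

lemma Fc_integrable (m : ℕ) (ξ η : Em m) {g : Em m × Em m → ℂ} (hg : Integrable g) :
    Integrable (Fc m ξ η g) := by
  refine (mul_chr_integrable m ξ η hg).norm.mono'
    (Complex.continuous_conj.comp_aestronglyMeasurable
      (mul_chr_integrable m ξ η hg).aestronglyMeasurable) (ae_of_all _ fun z => ?_)
  simp [Fc]

lemma point_rw (m : ℕ) (ξ η : Em m) (gs gd : Em m × Em m → ℂ) (z : Em m × Em m) :
    (∫ w : Em m × Em m, (starRingEnd ℂ) (gs (w - z)) * gd w) * chr m ξ η z
      = ∫ w : Em m × Em m, Fc m ξ η gs (w - z) * Hc m ξ η gd w := by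
  rw [← integral_mul_const]
  congr 1
  funext w
  rw [chr_mul m ξ η z w, Fc, Hc]
  simp only [map_mul]
  ring

lemma conv_chr_integrable (m : ℕ) (ξ η : Em m) (gs gd : Em m × Em m → ℂ)
    (hgs : Integrable gs) (hgd : Integrable gd) :
    Integrable (fun z : Em m × Em m =>
      (∫ w : Em m × Em m, (starRingEnd ℂ) (gs (w - z)) * gd w) * chr m ξ η z) := by
  simp_rw [point_rw m ξ η gs gd]
  exact (Psi_integrable m (Fc m ξ η gs) (Hc m ξ η gd) (Fc_integrable m ξ η hgs)
    (mul_chr_integrable m ξ η hgd)).integral_prod_left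

lemma conv_FT (m : ℕ) (ξ η : Em m) (gs gd : Em m × Em m → ℂ)
    (hgs : Integrable gs) (hgd : Integrable gd) :
    ∫ z : Em m × Em m, (∫ w : Em m × Em m, (starRingEnd ℂ) (gs (w - z)) * gd w) * chr m ξ η z
      = (starRingEnd ℂ) (∫ z : Em m × Em m, gs z * chr m ξ η z) *
          ∫ z : Em m × Em m, gd z * chr m ξ η z := by
  simp_rw [point_rw m ξ η gs gd]
  have hΨ : Integrable (Function.uncurry fun z w : Em m × Em m =>
      Fc m ξ η gs (w - z) * Hc m ξ η gd w) ((volume : Measure (Em m × Em m)).prod volume) :=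
    Psi_integrable m _ _ (Fc_integrable m ξ η hgs) (mul_chr_integrable m ξ η hgd)
  rw [integral_integral_swap hΨ]
  have step2 : ∀ w : Em m × Em m,
      ∫ z : Em m × Em m, Fc m ξ η gs (w - z) * Hc m ξ η gd w
        = (∫ u : Em m × Em m, Fc m ξ η gs u) * Hc m ξ η gd w := by
    intro w
    rw [integral_mul_const, integral_sub_left_eq_self (Fc m ξ η gs) volume w]
  simp_rw [step2]
  rw [integral_const_mul]
  congr 1
  exact integral_conj

lemma abs_sq_sub_abs_sq (a b : ℂ) :
    ‖a‖ ^ 2 - ‖b‖ ^ 2 = ((starRingEnd ℂ) (a + b) * (a - b)).re := by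
  simp only [Complex.sq_norm, Complex.normSq_apply, Complex.mul_re, Complex.sub_re,
    Complex.sub_im, Complex.add_re, Complex.add_im, Complex.conj_re, Complex.conj_im]
  ring

/-- Difference of the forward maps as the real part of the Fourier transform of
`conj(K_sum(−·)) ⋆ K_diff`, where `K_sum = K_{f₁} + K_{f₂}` and
`K_diff = K_{f₁} − K_{f₂}`. -/
theorem difference_of_forward_maps {m : ℕ} (hm : 1 ≤ m) (fr : ℝ) (hfr : 0 < fr)
    (K : Em m → Em m → ℂ)
    (hKcont : Continuous fun pq : Em m × Em m => K pq.1 pq.2)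
    (hKsupp : HasCompactSupport fun pq : Em m × Em m => K pq.1 pq.2)
    (f₁ f₂ : Em m → ℂ) (hf₁ : Measurable f₁) (hf₂ : Measurable f₂)
    (hb₁ : ∃ C : ℝ, ∀ x : Em m, ‖f₁ x‖ ≤ C)
    (hb₂ : ∃ C : ℝ, ∀ x : Em m, ‖f₂ x‖ ≤ C)
    (x y : Em m) :
    FwdF m fr K f₁ x y - FwdF m fr K f₂ x y =
      ((2 * Real.pi) ^ m : ℝ)⁻¹ *
        (FT2m m
          (conv2m m
            (fun z₁ z₂ => (starRingEnd ℂ)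
              ((kerF m fr K f₁ (-z₁) (-z₂)) + (kerF m fr K f₂ (-z₁) (-z₂))))
            (fun w₁ w₂ =>
              (kerF m fr K f₁ w₁ w₂) - (kerF m fr K f₂ w₁ w₂)))
          (fr • x) (-(fr • y))).re := by
  obtain ⟨C₁, hC₁⟩ := hb₁
  obtain ⟨C₂, hC₂⟩ := hb₂
  set ξ : Em m := fr • x with hξdef
  set η : Em m := -(fr • y) with hηdef
  set k₁ : Em m × Em m → ℂ := fun z => kerF m fr K f₁ z.1 z.2 with hk₁def
  set k₂ : Em m × Em m → ℂ := fun z => kerF m fr K f₂ z.1 z.2 with hk₂def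
  have hk₁ : Integrable k₁ := kerF_integrable m fr hfr K hKcont hKsupp f₁ hf₁ hC₁
  have hk₂ : Integrable k₂ := kerF_integrable m fr hfr K hKcont hKsupp f₂ hf₂ hC₂
  set gs : Em m × Em m → ℂ := fun z => k₁ z + k₂ z with hgsdef
  set gd : Em m × Em m → ℂ := fun z => k₁ z - k₂ z with hgddef
  have hgs : Integrable gs := hk₁.add hk₂
  have hgd : Integrable gd := hk₁.sub hk₂
  set I₁ : ℂ := ∫ z : Em m × Em m, k₁ z * chr m ξ η z with hI₁def
  set I₂ : ℂ := ∫ z : Em m × Em m, k₂ z * chr m ξ η z with hI₂def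
  set c : ℝ := ((2 * Real.pi) ^ m : ℝ) with hcdef
  have hc0 : 0 < c := by positivity
  have hFT₁ : FT2m m (kerF m fr K f₁) ξ η = (c : ℂ)⁻¹ * I₁ :=
    FT2m_eq m _ ξ η (mul_chr_integrable m ξ η hk₁)
  have hFT₂ : FT2m m (kerF m fr K f₂) ξ η = (c : ℂ)⁻¹ * I₂ :=
    FT2m_eq m _ ξ η (mul_chr_integrable m ξ η hk₂)
  have hL : FwdF m fr K f₁ x y - FwdF m fr K f₂ x y =
      c⁻¹ * (c⁻¹ * (‖I₁‖ ^ 2 - ‖I₂‖ ^ 2)) := by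
    rw [FwdF, FwdF, ← hξdef, ← hηdef, hFT₁, hFT₂, norm_mul, norm_mul]
    have : ‖((c : ℂ)⁻¹)‖ = c⁻¹ := by
      rw [norm_inv, Complex.norm_real, Real.norm_eq_abs, abs_of_pos hc0]
    rw [this]
    ring
  have hIs : (∫ z : Em m × Em m, gs z * chr m ξ η z) = I₁ + I₂ := by
    rw [hI₁def, hI₂def, ← integral_add (mul_chr_integrable m ξ η hk₁)
      (mul_chr_integrable m ξ η hk₂)]
    congr 1; funext z; rw [hgsdef]; ring
  have hId : (∫ z : Em m × Em m, gd z * chr m ξ η z) = I₁ - I₂ := by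
    rw [hI₁def, hI₂def, ← integral_sub (mul_chr_integrable m ξ η hk₁)
      (mul_chr_integrable m ξ η hk₂)]
    congr 1; funext z; rw [hgddef]; ring
  -- the convolution, pointwise
  have hconv : ∀ z : Em m × Em m,
      conv2m m
        (fun z₁ z₂ => (starRingEnd ℂ)
          ((kerF m fr K f₁ (-z₁) (-z₂)) + (kerF m fr K f₂ (-z₁) (-z₂))))
        (fun w₁ w₂ => (kerF m fr K f₁ w₁ w₂) - (kerF m fr K f₂ w₁ w₂)) z.1 z.2
      = ∫ w : Em m × Em m, (starRingEnd ℂ) (gs (w - z)) * gd w := by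
    intro z
    rw [conv2m]
    have hgsmeas : Measurable gs :=
      (kerF_meas m fr K hKcont f₁ hf₁).add (kerF_meas m fr K hKcont f₂ hf₂)
    have hint : Integrable (fun w : Em m × Em m => (starRingEnd ℂ) (gs (w - z)) * gd w) := by
      obtain ⟨M, hM⟩ := hKsupp.exists_bound_of_continuous hKcont
      set B : ℝ := fr ^ m * Real.exp C₁ * Real.exp C₁ * M + fr ^ m * Real.exp C₂ * Real.exp C₂ * M
        with hBdef
      have hB : ∀ u : Em m × Em m, ‖gs u‖ ≤ B := by
        intro u
        have h1 := kerF_norm_le m fr hfr K f₁ hC₁ u.1 u.2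
        have h2 := kerF_norm_le m fr hfr K f₂ hC₂ u.1 u.2
        have hM' : ‖K u.1 u.2‖ ≤ M := by
          simpa using hM (u.1, u.2)
        calc ‖gs u‖ ≤ ‖k₁ u‖ + ‖k₂ u‖ := by
              rw [hgsdef]; exact norm_add_le _ _
          _ ≤ B := by
              rw [hBdef]
              refine add_le_add (h1.trans ?_) (h2.trans ?_) <;> gcongr <;> positivity
      have hgdmeas : Measurable gd :=
        (kerF_meas m fr K hKcont f₁ hf₁).sub (kerF_meas m fr K hKcont f₂ hf₂)
      refine (hgd.norm.const_mul B).mono' ?_ (ae_of_all _ fun w => ?_)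
      · exact ((Complex.continuous_conj.measurable.comp
          (hgsmeas.comp (measurable_id.sub_const z))).mul hgdmeas).aestronglyMeasurable
      · calc ‖(starRingEnd ℂ) (gs (w - z)) * gd w‖
            = ‖gs (w - z)‖ * ‖gd w‖ := by
              simp
          _ ≤ B * ‖gd w‖ := by gcongr; exact hB _
    have h' : Integrable (Function.uncurry fun w₁ w₂ : Em m =>
        (starRingEnd ℂ) (gs ((w₁, w₂) - z)) * gd (w₁, w₂))
        ((volume : Measure (Em m)).prod volume) := by
      rw [← Measure.volume_eq_prod]; exact hint
    have h2 := integral_integral (f := fun w₁ w₂ : Em m =>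
        (starRingEnd ℂ) (gs ((w₁, w₂) - z)) * gd (w₁, w₂)) h'
    rw [← Measure.volume_eq_prod] at h2
    simp_rw [neg_sub]
    exact h2
  -- RHS
  have hR : FT2m m
        (conv2m m
          (fun z₁ z₂ => (starRingEnd ℂ)
            ((kerF m fr K f₁ (-z₁) (-z₂)) + (kerF m fr K f₂ (-z₁) (-z₂))))
          (fun w₁ w₂ => (kerF m fr K f₁ w₁ w₂) - (kerF m fr K f₂ w₁ w₂))) ξ η
      = (c : ℂ)⁻¹ * ((starRingEnd ℂ) (I₁ + I₂) * (I₁ - I₂)) := by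
    have hΦ : Integrable (fun z : Em m × Em m =>
        conv2m m
          (fun z₁ z₂ => (starRingEnd ℂ)
            ((kerF m fr K f₁ (-z₁) (-z₂)) + (kerF m fr K f₂ (-z₁) (-z₂))))
          (fun w₁ w₂ => (kerF m fr K f₁ w₁ w₂) - (kerF m fr K f₂ w₁ w₂)) z.1 z.2
          * chr m ξ η z) := by
      have e : (fun z : Em m × Em m =>
          conv2m m
            (fun z₁ z₂ => (starRingEnd ℂ)
              ((kerF m fr K f₁ (-z₁) (-z₂)) + (kerF m fr K f₂ (-z₁) (-z₂))))
            (fun w₁ w₂ => (kerF m fr K f₁ w₁ w₂) - (kerF m fr K f₂ w₁ w₂)) z.1 z.2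
            * chr m ξ η z)
          = fun z : Em m × Em m =>
              (∫ w : Em m × Em m, (starRingEnd ℂ) (gs (w - z)) * gd w) * chr m ξ η z :=
        funext fun z => by rw [hconv z]
      rw [e]
      exact conv_chr_integrable m ξ η gs gd hgs hgd
    rw [FT2m_eq m _ ξ η hΦ]
    congr 1
    simp_rw [hconv]
    rw [conv_FT m ξ η gs gd hgs hgd, hIs, hId]
  rw [hL, hR, abs_sq_sub_abs_sq I₁ I₂]
  have hre : ((c : ℂ)⁻¹ * ((starRingEnd ℂ) (I₁ + I₂) * (I₁ - I₂))).re
      = c⁻¹ * ((starRingEnd ℂ) (I₁ + I₂) * (I₁ - I₂)).re := by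
    rw [← Complex.ofReal_inv, Complex.re_ofReal_mul]
  rw [hre]

end
end

section
/- Isserlis-type covariance identity for circularly symmetric complex Gaussian pairs. Let (Ω, P) be a probability space and let X, Y : Ω → ℂ be measurable random variables such that the joint law of (X,Y) on ℂ² (viewed as a four-dimensional real Banach space) is a Gaussian measure, the pair is circularly symmetric (for every θ ∈ ℝ the joint law of (exp(iθ)·X, exp(iθ)·Y) equals the joint law of (X,Y)), and E[|X|⁴] < ∞, E[|Y|⁴] < ∞. Then Cov(|X|², |Y|²) = |E[X·conj(Y)]|²; that is, E[|X|²·|Y|²] − E[|X|²]·E[|Y|²] = |E[X·conj(Y)]|². -/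
open MeasureTheory Complex ProbabilityTheory
open Real Set
open scoped NNReal ENNReal

lemma rpow_two_eq (x : ℝ) : x ^ (2:ℝ) = x ^ 2 := by
  rw [show (2:ℝ) = ((2:ℕ):ℝ) by norm_num, Real.rpow_natCast]

lemma rpow_four_eq (x : ℝ) : x ^ (4:ℝ) = x ^ 4 := by
  rw [show (4:ℝ) = ((4:ℕ):ℝ) by norm_num, Real.rpow_natCast]

lemma Gamma_three_halves : Real.Gamma (3/2) = Real.sqrt π / 2 := by
  rw [show (3/2 : ℝ) = 1/2 + 1 by norm_num, Real.Gamma_add_one (by norm_num),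
    Real.Gamma_one_half_eq]
  ring

lemma Gamma_five_halves : Real.Gamma (5/2) = 3 * Real.sqrt π / 4 := by
  rw [show (5/2 : ℝ) = 3/2 + 1 by norm_num, Real.Gamma_add_one (by norm_num),
    Gamma_three_halves]
  ring

lemma int_sq_exp {b : ℝ} (hb : 0 < b) :
    ∫ x : ℝ, x ^ 2 * Real.exp (-b * x ^ 2) = Real.sqrt π / 2 * b ^ (-(3:ℝ)/2) := by
  calc ∫ x : ℝ, x ^ 2 * Real.exp (-b * x ^ 2)
      = ∫ x : ℝ, (fun t : ℝ => t ^ 2 * Real.exp (-b * t ^ 2)) |x| := by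
        congr 1; ext x; simp [_root_.sq_abs]
    _ = 2 * ∫ x in Ioi (0:ℝ), x ^ 2 * Real.exp (-b * x ^ 2) :=
        integral_comp_abs (f := fun t : ℝ => t ^ 2 * Real.exp (-b * t ^ 2))
    _ = 2 * ∫ x in Ioi (0:ℝ), x ^ (2:ℝ) * Real.exp (-b * x ^ (2:ℝ)) := by
        congr 1; refine setIntegral_congr_fun measurableSet_Ioi (fun x _ => ?_)
        rw [rpow_two_eq]
    _ = Real.sqrt π / 2 * b ^ (-(3:ℝ)/2) := by
        rw [_root_.integral_rpow_mul_exp_neg_mul_rpow (p := 2) (q := 2) (by norm_num)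
          (by norm_num) hb]
        rw [show ((2:ℝ)+1)/2 = 3/2 by norm_num, Gamma_three_halves]
        rw [show -((2:ℝ)+1)/2 = -(3:ℝ)/2 by norm_num]
        ring

lemma int_quart_exp {b : ℝ} (hb : 0 < b) :
    ∫ x : ℝ, x ^ 4 * Real.exp (-b * x ^ 2) = 3 * Real.sqrt π / 4 * b ^ (-(5:ℝ)/2) := by
  calc ∫ x : ℝ, x ^ 4 * Real.exp (-b * x ^ 2)
      = ∫ x : ℝ, (fun t : ℝ => t ^ 4 * Real.exp (-b * t ^ 2)) |x| := by
        congr 1; ext x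
        have h4 : |x| ^ 4 = x ^ 4 := by rw [← _root_.abs_pow]; exact abs_of_nonneg (by positivity)
        simp [_root_.sq_abs, h4]
    _ = 2 * ∫ x in Ioi (0:ℝ), x ^ 4 * Real.exp (-b * x ^ 2) :=
        integral_comp_abs (f := fun t : ℝ => t ^ 4 * Real.exp (-b * t ^ 2))
    _ = 2 * ∫ x in Ioi (0:ℝ), x ^ (4:ℝ) * Real.exp (-b * x ^ (2:ℝ)) := by
        congr 1; refine setIntegral_congr_fun measurableSet_Ioi (fun x _ => ?_)
        rw [rpow_two_eq, rpow_four_eq]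
    _ = 3 * Real.sqrt π / 4 * b ^ (-(5:ℝ)/2) := by
        rw [_root_.integral_rpow_mul_exp_neg_mul_rpow (p := 2) (q := 4) (by norm_num)
          (by norm_num) hb]
        rw [show ((4:ℝ)+1)/2 = 5/2 by norm_num, Gamma_five_halves]
        rw [show -((4:ℝ)+1)/2 = -(5:ℝ)/2 by norm_num]
        ring

lemma integral_gaussianReal_eq {m : ℝ} {v : ℝ≥0} (hv : v ≠ 0) (g : ℝ → ℝ) :
    ∫ x, g x ∂(gaussianReal m v) = ∫ x, gaussianPDFReal m v x * g x := by
  rw [gaussianReal_of_var_ne_zero _ hv, gaussianPDF_def]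
  rw [show (fun x => ENNReal.ofReal (gaussianPDFReal m v x))
      = (fun x => ((Real.toNNReal (gaussianPDFReal m v x) : ℝ≥0) : ℝ≥0∞)) from rfl]
  rw [integral_withDensity_eq_integral_smul
    ((measurable_gaussianPDFReal m v).real_toNNReal) g]
  congr 1; ext x
  simp [NNReal.smul_def, Real.coe_toNNReal _ (gaussianPDFReal_nonneg m v x)]

lemma integral_neg_comp (g : ℝ → ℝ) : ∫ x : ℝ, g (-x) = ∫ x : ℝ, g x := by
  conv_rhs => rw [← Measure.map_neg_eq_self (volume : Measure ℝ)]
  exact (integral_map_equiv (Homeomorph.neg ℝ).toMeasurableEquiv g).symm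

lemma gaussianPDFReal_zero_eq {v : ℝ≥0} (x : ℝ) :
    gaussianPDFReal 0 v x
      = (Real.sqrt (2 * π * v))⁻¹ * Real.exp (-(2 * (v:ℝ))⁻¹ * x ^ 2) := by
  rw [gaussianPDFReal]
  congr 1
  rw [sub_zero]
  field_simp

lemma integral_id_gaussianReal' {m : ℝ} {v : ℝ≥0} (hv : v ≠ 0) :
    ∫ x, x ∂(gaussianReal m v) = m := by
  have hvpos : (0:ℝ) < v := lt_of_le_of_ne (v.2) (by exact_mod_cast (Ne.symm hv))
  have hb : (0:ℝ) < (2 * (v:ℝ))⁻¹ := by positivity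
  rw [integral_gaussianReal_eq hv]
  have hshift : ∀ x : ℝ, gaussianPDFReal m v x * x
      = (fun y => gaussianPDFReal 0 v y * (y + m)) (x - m) := by
    intro x
    simp only [gaussianPDFReal_sub, zero_add, sub_add_cancel]
  calc ∫ x, gaussianPDFReal m v x * x
      = ∫ x, (fun y => gaussianPDFReal 0 v y * (y + m)) (x - m) := by
        congr 1; ext x; exact hshift x
    _ = ∫ y, gaussianPDFReal 0 v y * (y + m) := integral_sub_right_eq_self (μ := volume) (fun y => gaussianPDFReal 0 v y * (y + m)) m
    _ = ∫ y, (gaussianPDFReal 0 v y * y + m * gaussianPDFReal 0 v y) := by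
        congr 1; ext y; ring
    _ = (∫ y, gaussianPDFReal 0 v y * y) + ∫ y, m * gaussianPDFReal 0 v y := by
        refine integral_add ?_ ((integrable_gaussianPDFReal 0 v).const_mul m)
        have : (fun y => gaussianPDFReal 0 v y * y)
            = fun y => (Real.sqrt (2 * π * v))⁻¹ * (y * Real.exp (-(2 * (v:ℝ))⁻¹ * y ^ 2)) := by
          ext y; rw [gaussianPDFReal_zero_eq]; ring
        rw [this]
        exact (integrable_mul_exp_neg_mul_sq hb).const_mul _
    _ = m := by
        have hodd : ∫ y, gaussianPDFReal 0 v y * y = 0 := by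
          have h1 : ∫ y : ℝ, (fun y => gaussianPDFReal 0 v y * y) (-y)
              = ∫ y, gaussianPDFReal 0 v y * y := integral_neg_comp (fun y => gaussianPDFReal 0 v y * y)
          have h2 : ∀ y : ℝ, (fun y => gaussianPDFReal 0 v y * y) (-y)
              = -(gaussianPDFReal 0 v y * y) := by
            intro y
            simp only [gaussianPDFReal_zero_eq]
            ring_nf
          rw [show (fun y : ℝ => (fun y => gaussianPDFReal 0 v y * y) (-y))
              = fun y => -(gaussianPDFReal 0 v y * y) from funext h2] at h1
          rw [integral_neg] at h1
          linarith
        rw [hodd, integral_const_mul, integral_gaussianPDFReal_eq_one 0 hv]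
        ring

lemma inv_rpow_eq {s : ℝ} (hs : 0 < s) (y : ℝ) : (s⁻¹) ^ (-y) = s ^ y := by
  rw [Real.inv_rpow hs.le, Real.rpow_neg hs.le, inv_inv]

lemma rpow_three_halves {s : ℝ} (hs : 0 < s) : s ^ ((3:ℝ)/2) = s * Real.sqrt s := by
  rw [show (3:ℝ)/2 = 1 + 1/2 by norm_num, Real.rpow_add hs, Real.rpow_one,
    ← Real.sqrt_eq_rpow]

lemma rpow_five_halves {s : ℝ} (hs : 0 < s) : s ^ ((5:ℝ)/2) = s ^ 2 * Real.sqrt s := by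
  rw [show (5:ℝ)/2 = 2 + 1/2 by norm_num, Real.rpow_add hs, ← Real.sqrt_eq_rpow,
    show (2:ℝ) = ((2:ℕ):ℝ) by norm_num, Real.rpow_natCast]

lemma integral_sq_gaussianReal (v : ℝ≥0) : ∫ x, x ^ 2 ∂(gaussianReal 0 v) = v := by
  by_cases hv : v = 0
  · simp [hv, gaussianReal_zero_var]
  have hvpos : (0:ℝ) < v := lt_of_le_of_ne (v.2) (by exact_mod_cast (Ne.symm hv))
  set s : ℝ := 2 * (v:ℝ) with hs_def
  have hs : 0 < s := by positivity
  have hb : (0:ℝ) < s⁻¹ := by positivity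
  rw [integral_gaussianReal_eq hv]
  have : (fun x : ℝ => gaussianPDFReal 0 v x * x ^ 2)
      = fun x => (Real.sqrt (2 * π * v))⁻¹ * (x ^ 2 * Real.exp (-s⁻¹ * x ^ 2)) := by
    ext x; rw [gaussianPDFReal_zero_eq, hs_def]; ring_nf
  rw [this, integral_const_mul, int_sq_exp hb]
  rw [show -(3:ℝ)/2 = -((3:ℝ)/2) by norm_num, inv_rpow_eq hs, rpow_three_halves hs]
  rw [show 2 * π * (v:ℝ) = π * s by rw [hs_def]; ring, Real.sqrt_mul pi_pos.le]
  have h1 : Real.sqrt s * Real.sqrt s = s := Real.mul_self_sqrt hs.le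
  have h2 : Real.sqrt π ≠ 0 := ne_of_gt (Real.sqrt_pos.mpr pi_pos)
  have h3 : Real.sqrt s ≠ 0 := ne_of_gt (Real.sqrt_pos.mpr hs)
  have : (v:ℝ) = s / 2 := by rw [hs_def]; ring
  rw [this]
  field_simp

lemma integral_quart_gaussianReal (v : ℝ≥0) :
    ∫ x, x ^ 4 ∂(gaussianReal 0 v) = 3 * (v:ℝ) ^ 2 := by
  by_cases hv : v = 0
  · simp [hv, gaussianReal_zero_var]
  have hvpos : (0:ℝ) < v := lt_of_le_of_ne (v.2) (by exact_mod_cast (Ne.symm hv))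
  set s : ℝ := 2 * (v:ℝ) with hs_def
  have hs : 0 < s := by positivity
  have hb : (0:ℝ) < s⁻¹ := by positivity
  rw [integral_gaussianReal_eq hv]
  have : (fun x : ℝ => gaussianPDFReal 0 v x * x ^ 4)
      = fun x => (Real.sqrt (2 * π * v))⁻¹ * (x ^ 4 * Real.exp (-s⁻¹ * x ^ 2)) := by
    ext x; rw [gaussianPDFReal_zero_eq, hs_def]; ring_nf
  rw [this, integral_const_mul, int_quart_exp hb]
  rw [show -(5:ℝ)/2 = -((5:ℝ)/2) by norm_num, inv_rpow_eq hs, rpow_five_halves hs]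
  rw [show 2 * π * (v:ℝ) = π * s by rw [hs_def]; ring, Real.sqrt_mul pi_pos.le]
  have h1 : Real.sqrt s * Real.sqrt s = s := Real.mul_self_sqrt hs.le
  have h2 : Real.sqrt π ≠ 0 := ne_of_gt (Real.sqrt_pos.mpr pi_pos)
  have h3 : Real.sqrt s ≠ 0 := ne_of_gt (Real.sqrt_pos.mpr hs)
  have hvs : (v:ℝ) ^ 2 = s ^ 2 / 4 := by rw [hs_def]; ring
  rw [hvs]
  field_simp

lemma abs_monomial_le {u v : ℝ} {i j : ℕ} (hij : i + j ≤ 4) :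
    |u ^ i * v ^ j| ≤ 1 + (u ^ 4 + v ^ 4) := by
  set M : ℝ := max 1 (max |u| |v|) with hM_def
  have hM1 : (1:ℝ) ≤ M := le_max_left _ _
  have hMu : |u| ≤ M := le_trans (le_max_left _ _) (le_max_right _ _)
  have hMv : |v| ≤ M := le_trans (le_max_right _ _) (le_max_right _ _)
  have hM0 : (0:ℝ) ≤ M := le_trans zero_le_one hM1
  have h1 : |u ^ i * v ^ j| = |u| ^ i * |v| ^ j := by
    rw [abs_mul, _root_.abs_pow, _root_.abs_pow]
  have h2 : |u| ^ i * |v| ^ j ≤ M ^ i * M ^ j :=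
    mul_le_mul (pow_le_pow_left₀ (abs_nonneg u) hMu i)
      (pow_le_pow_left₀ (abs_nonneg v) hMv j) (by positivity) (by positivity)
  have h3 : M ^ i * M ^ j = M ^ (i + j) := (pow_add M i j).symm
  have h4 : M ^ (i + j) ≤ M ^ 4 := pow_le_pow_right₀ hM1 hij
  have h5 : M ^ 4 ≤ 1 + (u ^ 4 + v ^ 4) := by
    have hu4 : |u| ^ 4 = u ^ 4 := by
      rw [← _root_.abs_pow]; exact abs_of_nonneg (by positivity)
    have hv4 : |v| ^ 4 = v ^ 4 := by
      rw [← _root_.abs_pow]; exact abs_of_nonneg (by positivity)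
    have hu0 : (0:ℝ) ≤ u ^ 4 := by positivity
    have hv0 : (0:ℝ) ≤ v ^ 4 := by positivity
    rcases max_choice (1:ℝ) (max |u| |v|) with h | h
    · rw [hM_def, h]; linarith [one_pow 4 (M := ℝ)]
    · rcases max_choice |u| |v| with h' | h'
      · rw [hM_def, h, h', hu4]; linarith
      · rw [hM_def, h, h', hv4]; linarith
  calc |u ^ i * v ^ j| = |u| ^ i * |v| ^ j := h1
    _ ≤ M ^ i * M ^ j := h2
    _ = M ^ (i+j) := h3
    _ ≤ M ^ 4 := h4
    _ ≤ 1 + (u ^ 4 + v ^ 4) := h5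

lemma integrable_pow4 {Ω : Type*} [MeasurableSpace Ω] {P : Measure Ω}
    {U : Ω → ℝ} (hU : MemLp U 4 P) : Integrable (fun ω => U ω ^ 4) P := by
  have h := hU.integrable_norm_rpow (by norm_num) (by norm_num)
  refine h.congr (Filter.Eventually.of_forall fun ω => ?_)
  show ‖U ω‖ ^ (ENNReal.toReal 4) = U ω ^ 4
  rw [show (ENNReal.toReal 4) = ((4:ℕ):ℝ) by norm_num, Real.rpow_natCast,
    Real.norm_eq_abs, ← _root_.abs_pow]
  exact abs_of_nonneg (by positivity)

lemma integrable_monomial {Ω : Type*} [MeasurableSpace Ω] {P : Measure Ω}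
    [IsProbabilityMeasure P] {U V : Ω → ℝ} (hU : MemLp U 4 P) (hV : MemLp V 4 P)
    (i j : ℕ) (hij : i + j ≤ 4) :
    Integrable (fun ω => U ω ^ i * V ω ^ j) P := by
  have hU4 : Integrable (fun ω => U ω ^ 4) P := integrable_pow4 hU
  have hV4 : Integrable (fun ω => V ω ^ 4) P := integrable_pow4 hV
  have haesm : AEStronglyMeasurable (fun ω => U ω ^ i * V ω ^ j) P := by
    have aU : AEMeasurable U P := hU.aestronglyMeasurable.aemeasurable
    have aV : AEMeasurable V P := hV.aestronglyMeasurable.aemeasurable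
    exact ((aU.pow_const i).mul (aV.pow_const j)).aestronglyMeasurable
  refine Integrable.mono' ((integrable_const (1:ℝ)).add (hU4.add hV4)) haesm ?_
  exact Filter.Eventually.of_forall fun ω => by
    rw [Real.norm_eq_abs]; exact abs_monomial_le hij

lemma integral_add5 {Ω : Type*} [MeasurableSpace Ω] {P : Measure Ω}
    {f1 f2 f3 f4 f5 : Ω → ℝ} (h1 : Integrable f1 P) (h2 : Integrable f2 P)
    (h3 : Integrable f3 P) (h4 : Integrable f4 P) (h5 : Integrable f5 P) :
    ∫ ω, (f1 ω + f2 ω + f3 ω + f4 ω + f5 ω) ∂P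
      = (∫ ω, f1 ω ∂P) + (∫ ω, f2 ω ∂P) + (∫ ω, f3 ω ∂P) + (∫ ω, f4 ω ∂P)
        + (∫ ω, f5 ω ∂P) := by
  have h12 : Integrable (fun ω => f1 ω + f2 ω) P := h1.add h2
  have h123 : Integrable (fun ω => f1 ω + f2 ω + f3 ω) P := h12.add h3
  have h1234 : Integrable (fun ω => f1 ω + f2 ω + f3 ω + f4 ω) P := h123.add h4
  calc ∫ ω, (f1 ω + f2 ω + f3 ω + f4 ω + f5 ω) ∂P
      = (∫ ω, (f1 ω + f2 ω + f3 ω + f4 ω) ∂P) + ∫ ω, f5 ω ∂P := integral_add h1234 h5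
    _ = ((∫ ω, (f1 ω + f2 ω + f3 ω) ∂P) + ∫ ω, f4 ω ∂P) + ∫ ω, f5 ω ∂P := by
        rw [integral_add h123 h4]
    _ = (((∫ ω, (f1 ω + f2 ω) ∂P) + ∫ ω, f3 ω ∂P) + ∫ ω, f4 ω ∂P) + ∫ ω, f5 ω ∂P := by
        rw [integral_add h12 h3]
    _ = (∫ ω, f1 ω ∂P) + (∫ ω, f2 ω ∂P) + (∫ ω, f3 ω ∂P) + (∫ ω, f4 ω ∂P)
        + (∫ ω, f5 ω ∂P) := by rw [integral_add h1 h2]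

lemma integral_add3 {Ω : Type*} [MeasurableSpace Ω] {P : Measure Ω}
    {f1 f2 f3 : Ω → ℝ} (h1 : Integrable f1 P) (h2 : Integrable f2 P)
    (h3 : Integrable f3 P) :
    ∫ ω, (f1 ω + f2 ω + f3 ω) ∂P
      = (∫ ω, f1 ω ∂P) + (∫ ω, f2 ω ∂P) + (∫ ω, f3 ω ∂P) := by
  have h12 : Integrable (fun ω => f1 ω + f2 ω) P := h1.add h2
  calc ∫ ω, (f1 ω + f2 ω + f3 ω) ∂P
      = (∫ ω, (f1 ω + f2 ω) ∂P) + ∫ ω, f3 ω ∂P := integral_add h12 h3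
    _ = (∫ ω, f1 ω ∂P) + (∫ ω, f2 ω ∂P) + (∫ ω, f3 ω ∂P) := by rw [integral_add h1 h2]

lemma momentB {Ω : Type*} [MeasurableSpace Ω] (P : Measure Ω) [IsProbabilityMeasure P]
    (U V : Ω → ℝ) (hU : MemLp U 4 P) (hV : MemLp V 4 P)
    (h : ∀ a b : ℝ, ∫ ω, (a * U ω + b * V ω) ^ 4 ∂P
      = 3 * (∫ ω, (a * U ω + b * V ω) ^ 2 ∂P) ^ 2) :
    ∫ ω, U ω ^ 2 * V ω ^ 2 ∂P
      = (∫ ω, U ω ^ 2 ∂P) * (∫ ω, V ω ^ 2 ∂P) + 2 * (∫ ω, U ω * V ω ∂P) ^ 2 := by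
  have i40 : Integrable (fun ω => U ω ^ 4) P := by
    simpa using integrable_monomial hU hV 4 0 (by norm_num)
  have i31 : Integrable (fun ω => U ω ^ 3 * V ω) P := by
    simpa using integrable_monomial hU hV 3 1 (by norm_num)
  have i22 : Integrable (fun ω => U ω ^ 2 * V ω ^ 2) P :=
    integrable_monomial hU hV 2 2 (by norm_num)
  have i13 : Integrable (fun ω => U ω * V ω ^ 3) P := by
    simpa using integrable_monomial hU hV 1 3 (by norm_num)
  have i04 : Integrable (fun ω => V ω ^ 4) P := by
    simpa using integrable_monomial hU hV 0 4 (by norm_num)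
  have i20 : Integrable (fun ω => U ω ^ 2) P := by
    simpa using integrable_monomial hU hV 2 0 (by norm_num)
  have i11 : Integrable (fun ω => U ω * V ω) P := by
    simpa using integrable_monomial hU hV 1 1 (by norm_num)
  have i02 : Integrable (fun ω => V ω ^ 2) P := by
    simpa using integrable_monomial hU hV 0 2 (by norm_num)
  have E4 : ∀ a b : ℝ, ∫ ω, (a * U ω + b * V ω) ^ 4 ∂P
      = a^4 * (∫ ω, U ω ^ 4 ∂P) + 4*a^3*b * (∫ ω, U ω ^ 3 * V ω ∂P)
        + 6*a^2*b^2 * (∫ ω, U ω ^ 2 * V ω ^ 2 ∂P) + 4*a*b^3 * (∫ ω, U ω * V ω ^ 3 ∂P)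
        + b^4 * (∫ ω, V ω ^ 4 ∂P) := by
    intro a b
    have hfun : (fun ω => (a * U ω + b * V ω) ^ 4)
        = fun ω => a^4 * (U ω ^ 4) + 4*a^3*b * (U ω ^ 3 * V ω)
          + 6*a^2*b^2 * (U ω ^ 2 * V ω ^ 2) + 4*a*b^3 * (U ω * V ω ^ 3)
          + b^4 * (V ω ^ 4) := by
      ext ω; ring
    rw [hfun, integral_add5 (i40.const_mul _) (i31.const_mul _) (i22.const_mul _)
      (i13.const_mul _) (i04.const_mul _), integral_const_mul, integral_const_mul,
      integral_const_mul, integral_const_mul, integral_const_mul]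
  have E2 : ∀ a b : ℝ, ∫ ω, (a * U ω + b * V ω) ^ 2 ∂P
      = a^2 * (∫ ω, U ω ^ 2 ∂P) + 2*a*b * (∫ ω, U ω * V ω ∂P)
        + b^2 * (∫ ω, V ω ^ 2 ∂P) := by
    intro a b
    have hfun : (fun ω => (a * U ω + b * V ω) ^ 2)
        = fun ω => a^2 * (U ω ^ 2) + 2*a*b * (U ω * V ω) + b^2 * (V ω ^ 2) := by
      ext ω; ring
    rw [hfun, integral_add3 (i20.const_mul _) (i11.const_mul _) (i02.const_mul _),
      integral_const_mul, integral_const_mul, integral_const_mul]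
  have e10 := h 1 0
  have e01 := h 0 1
  have e11 := h 1 1
  have e1m1 := h 1 (-1)
  rw [E4, E2] at e10 e01 e11 e1m1
  linear_combination (e11 + e1m1 - 2*e10 - 2*e01) / 12

lemma integral_id_gaussianReal_all (m : ℝ) (v : ℝ≥0) :
    ∫ x, x ∂(gaussianReal m v) = m := by
  by_cases hv : v = 0
  · simp [hv, gaussianReal_zero_var]
  · exact integral_id_gaussianReal' hv

lemma gauss_quartic {Ω : Type*} [MeasurableSpace Ω] (P : Measure Ω) [IsProbabilityMeasure P]
    (X Y : Ω → ℂ) (hX : Measurable X) (hY : Measurable Y)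
    (hgauss : ∀ L : (ℂ × ℂ) →L[ℝ] ℝ, ∃ (μ : ℝ) (σ : NNReal),
      Measure.map L (Measure.map (fun ω => (X ω, Y ω)) P) = gaussianReal μ σ)
    (hcirc : ∀ θ : ℝ,
      Measure.map (fun ω => (Complex.exp (Complex.I * θ) * X ω,
        Complex.exp (Complex.I * θ) * Y ω)) P
        = Measure.map (fun ω => (X ω, Y ω)) P)
    (L : (ℂ × ℂ) →L[ℝ] ℝ) :
    ∫ ω, (L (X ω, Y ω)) ^ 4 ∂P = 3 * (∫ ω, (L (X ω, Y ω)) ^ 2 ∂P) ^ 2 := by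
  obtain ⟨m, v, hmv⟩ := hgauss L
  have hg : Measurable (fun ω => (X ω, Y ω)) := hX.prodMk hY
  have hZ : Measurable (fun ω => L (X ω, Y ω)) := L.measurable.comp hg
  have hmap : Measure.map (fun ω => L (X ω, Y ω)) P = gaussianReal m v := by
    rw [← hmv, Measure.map_map L.measurable hg]; rfl
  have hgneg : Measurable (fun ω => (-(X ω), -(Y ω))) := hX.neg.prodMk hY.neg
  have hmapneg : Measure.map (fun ω => L (-(X ω), -(Y ω))) P = gaussianReal m v := by
    have hπ := hcirc π
    have heq : (fun ω => (Complex.exp (Complex.I * (π:ℝ)) * X ω,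
        Complex.exp (Complex.I * (π:ℝ)) * Y ω)) = fun ω => (-(X ω), -(Y ω)) := by
      funext ω
      have hexp : Complex.exp (Complex.I * (π:ℝ)) = -1 := by
        rw [mul_comm]; exact Complex.exp_pi_mul_I
      rw [hexp]; simp
    rw [heq] at hπ
    calc Measure.map (fun ω => L (-(X ω), -(Y ω))) P
        = Measure.map L (Measure.map (fun ω => (-(X ω), -(Y ω))) P) := by
          rw [Measure.map_map L.measurable hgneg]; rfl
      _ = Measure.map L (Measure.map (fun ω => (X ω, Y ω)) P) := by rw [hπ]
      _ = gaussianReal m v := hmv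
  have tr : ∀ f : ℝ → ℝ, Measurable f →
      ∫ ω, f (L (X ω, Y ω)) ∂P = ∫ x, f x ∂(gaussianReal m v) := by
    intro f hf
    rw [← hmap, integral_map hZ.aemeasurable hf.aestronglyMeasurable]
  have trneg : ∀ f : ℝ → ℝ, Measurable f →
      ∫ ω, f (L (-(X ω), -(Y ω))) ∂P = ∫ x, f x ∂(gaussianReal m v) := by
    intro f hf
    have hZn : Measurable (fun ω => L (-(X ω), -(Y ω))) := L.measurable.comp hgneg
    rw [← hmapneg, integral_map hZn.aemeasurable hf.aestronglyMeasurable]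
  have h1 : ∫ ω, L (X ω, Y ω) ∂P = m := by
    have := tr id measurable_id
    simp only [id_eq] at this
    rwa [integral_id_gaussianReal_all] at this
  have h2 : ∫ ω, L (-(X ω), -(Y ω)) ∂P = m := by
    have := trneg id measurable_id
    simp only [id_eq] at this
    rwa [integral_id_gaussianReal_all] at this
  have hLneg : ∀ ω, L (-(X ω), -(Y ω)) = -(L (X ω, Y ω)) := by
    intro ω
    have : (-(X ω), -(Y ω)) = -((X ω, Y ω)) := rfl
    rw [this, map_neg]
  have hm0 : m = 0 := by
    have h2' : ∫ ω, -(L (X ω, Y ω)) ∂P = m := by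
      rw [← h2]; congr 1; ext ω; rw [hLneg ω]
    rw [integral_neg, h1] at h2'
    linarith
  subst hm0
  have hsq : ∫ ω, (L (X ω, Y ω)) ^ 2 ∂P = v := by
    have := tr (fun x => x ^ 2) (measurable_id.pow_const 2)
    rwa [integral_sq_gaussianReal] at this
  have hqu : ∫ ω, (L (X ω, Y ω)) ^ 4 ∂P = 3 * (v:ℝ) ^ 2 := by
    have := tr (fun x => x ^ 4) (measurable_id.pow_const 4)
    rwa [integral_quart_gaussianReal] at this
  rw [hsq, hqu]

lemma integral_add4 {Ω : Type*} [MeasurableSpace Ω] {P : Measure Ω}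
    {f1 f2 f3 f4 : Ω → ℝ} (h1 : Integrable f1 P) (h2 : Integrable f2 P)
    (h3 : Integrable f3 P) (h4 : Integrable f4 P) :
    ∫ ω, (f1 ω + f2 ω + f3 ω + f4 ω) ∂P
      = (∫ ω, f1 ω ∂P) + (∫ ω, f2 ω ∂P) + (∫ ω, f3 ω ∂P) + (∫ ω, f4 ω ∂P) := by
  have h12 : Integrable (fun ω => f1 ω + f2 ω) P := h1.add h2
  have h123 : Integrable (fun ω => f1 ω + f2 ω + f3 ω) P := h12.add h3
  calc ∫ ω, (f1 ω + f2 ω + f3 ω + f4 ω) ∂P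
      = (∫ ω, (f1 ω + f2 ω + f3 ω) ∂P) + ∫ ω, f4 ω ∂P := integral_add h123 h4
    _ = ((∫ ω, (f1 ω + f2 ω) ∂P) + ∫ ω, f3 ω ∂P) + ∫ ω, f4 ω ∂P := by
        rw [integral_add h12 h3]
    _ = (∫ ω, f1 ω ∂P) + (∫ ω, f2 ω ∂P) + (∫ ω, f3 ω ∂P) + (∫ ω, f4 ω ∂P) := by
        rw [integral_add h1 h2]

/-- Isserlis-type covariance identity for circularly symmetric complex Gaussian
pairs: if the joint law of `(X,Y)` on `ℂ²` is Gaussian (every continuous real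
linear functional pushes it forward to a, possibly degenerate, Gaussian measure
on `ℝ`), the pair is circularly symmetric, and fourth moments are finite, then
`Cov(|X|², |Y|²) = |E[X·conj(Y)]|²`. -/
theorem isserlis_covariance_identity
    {Ω : Type*} [MeasurableSpace Ω] (P : Measure Ω) [IsProbabilityMeasure P]
    (X Y : Ω → ℂ) (hX : Measurable X) (hY : Measurable Y)
    (hgauss : ∀ L : (ℂ × ℂ) →L[ℝ] ℝ, ∃ (μ : ℝ) (σ : NNReal),
      Measure.map L (Measure.map (fun ω => (X ω, Y ω)) P) = gaussianReal μ σ)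
    (hcirc : ∀ θ : ℝ,
      Measure.map (fun ω => (Complex.exp (Complex.I * θ) * X ω,
        Complex.exp (Complex.I * θ) * Y ω)) P
        = Measure.map (fun ω => (X ω, Y ω)) P)
    (hX4 : MemLp X 4 P) (hY4 : MemLp Y 4 P) :
    (∫ ω, ‖X ω‖ ^ 2 * ‖Y ω‖ ^ 2 ∂P)
        - (∫ ω, ‖X ω‖ ^ 2 ∂P) * (∫ ω, ‖Y ω‖ ^ 2 ∂P)
      = ‖∫ ω, X ω * (starRingEnd ℂ) (Y ω) ∂P‖ ^ 2 := by
  have hg : Measurable (fun ω => (X ω, Y ω)) := hX.prodMk hY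
  -- component MemLp facts
  have mA1 : MemLp (fun ω => (X ω).re) 4 P := by
    refine hX4.of_le ((Complex.measurable_re.comp hX).aestronglyMeasurable)
      (Filter.Eventually.of_forall fun ω => ?_)
    rw [Real.norm_eq_abs]
    exact Complex.abs_re_le_norm _
  have mA2 : MemLp (fun ω => (X ω).im) 4 P := by
    refine hX4.of_le ((Complex.measurable_im.comp hX).aestronglyMeasurable)
      (Filter.Eventually.of_forall fun ω => ?_)
    rw [Real.norm_eq_abs]
    exact Complex.abs_im_le_norm _
  have mB1 : MemLp (fun ω => (Y ω).re) 4 P := by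
    refine hY4.of_le ((Complex.measurable_re.comp hY).aestronglyMeasurable)
      (Filter.Eventually.of_forall fun ω => ?_)
    rw [Real.norm_eq_abs]
    exact Complex.abs_re_le_norm _
  have mB2 : MemLp (fun ω => (Y ω).im) 4 P := by
    refine hY4.of_le ((Complex.measurable_im.comp hY).aestronglyMeasurable)
      (Filter.Eventually.of_forall fun ω => ?_)
    rw [Real.norm_eq_abs]
    exact Complex.abs_im_le_norm _
  -- quartic identity for arbitrary linear combinations of two coordinate functionals
  have key : ∀ S T : (ℂ × ℂ) →L[ℝ] ℝ, ∀ a b : ℝ,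
      ∫ ω, (a * S (X ω, Y ω) + b * T (X ω, Y ω)) ^ 4 ∂P
        = 3 * (∫ ω, (a * S (X ω, Y ω) + b * T (X ω, Y ω)) ^ 2 ∂P) ^ 2 := by
    intro S T a b
    have h := gauss_quartic P X Y hX hY hgauss hcirc (a • S + b • T)
    have happ : ∀ p : ℂ × ℂ, (a • S + b • T) p = a * S p + b * T p := by
      intro p
      simp [ContinuousLinearMap.add_apply, ContinuousLinearMap.smul_apply, smul_eq_mul]
    simp only [happ] at h
    exact h
  -- Isserlis identity for each component pair
  have hq : ∀ (S T : (ℂ × ℂ) →L[ℝ] ℝ) (U V : Ω → ℝ),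
      (∀ ω, S (X ω, Y ω) = U ω) → (∀ ω, T (X ω, Y ω) = V ω) →
      MemLp U 4 P → MemLp V 4 P →
      ∫ ω, U ω ^ 2 * V ω ^ 2 ∂P
        = (∫ ω, U ω ^ 2 ∂P) * (∫ ω, V ω ^ 2 ∂P) + 2 * (∫ ω, U ω * V ω ∂P) ^ 2 := by
    intro S T U V hS hT hU hV
    refine momentB P U V hU hV fun a b => ?_
    have h := key S T a b
    simp only [hS, hT] at h
    exact h
  set SR : (ℂ × ℂ) →L[ℝ] ℝ := Complex.reCLM.comp (ContinuousLinearMap.fst ℝ ℂ ℂ) with hSRdef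
  set SI : (ℂ × ℂ) →L[ℝ] ℝ := Complex.imCLM.comp (ContinuousLinearMap.fst ℝ ℂ ℂ) with hSIdef
  set TR : (ℂ × ℂ) →L[ℝ] ℝ := Complex.reCLM.comp (ContinuousLinearMap.snd ℝ ℂ ℂ) with hTRdef
  set TI : (ℂ × ℂ) →L[ℝ] ℝ := Complex.imCLM.comp (ContinuousLinearMap.snd ℝ ℂ ℂ) with hTIdef
  have hB11 := hq SR TR (fun ω => (X ω).re) (fun ω => (Y ω).re)
    (fun ω => rfl) (fun ω => rfl) mA1 mB1
  have hB12 := hq SR TI (fun ω => (X ω).re) (fun ω => (Y ω).im)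
    (fun ω => rfl) (fun ω => rfl) mA1 mB2
  have hB21 := hq SI TR (fun ω => (X ω).im) (fun ω => (Y ω).re)
    (fun ω => rfl) (fun ω => rfl) mA2 mB1
  have hB22 := hq SI TI (fun ω => (X ω).im) (fun ω => (Y ω).im)
    (fun ω => rfl) (fun ω => rfl) mA2 mB2
  -- rotation by π/2
  have hIeq : Complex.exp (Complex.I * ((π/2 : ℝ) : ℂ)) = Complex.I := by
    rw [mul_comm, Complex.exp_mul_I, ← Complex.ofReal_cos, ← Complex.ofReal_sin,
      Real.cos_pi_div_two, Real.sin_pi_div_two]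
    simp
  have hrot : Measure.map (fun ω => (Complex.I * X ω, Complex.I * Y ω)) P
      = Measure.map (fun ω => (X ω, Y ω)) P := by
    have h := hcirc (π/2)
    rwa [hIeq] at h
  have rotInt : ∀ f : ℂ × ℂ → ℝ, Measurable f →
      ∫ ω, f (Complex.I * X ω, Complex.I * Y ω) ∂P = ∫ ω, f (X ω, Y ω) ∂P := by
    intro f hf
    have h1 : Measurable fun ω => (Complex.I * X ω, Complex.I * Y ω) :=
      (measurable_const.mul hX).prodMk (measurable_const.mul hY)
    rw [← integral_map h1.aemeasurable hf.aestronglyMeasurable, hrot,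
      integral_map hg.aemeasurable hf.aestronglyMeasurable]
  have hc22 : ∫ ω, (X ω).im * (Y ω).im ∂P = ∫ ω, (X ω).re * (Y ω).re ∂P := by
    have h := rotInt (fun p => p.1.re * p.2.re)
      ((Complex.measurable_re.comp measurable_fst).mul
        (Complex.measurable_re.comp measurable_snd))
    simpa only [Complex.mul_re, Complex.I_re, Complex.I_im, zero_mul, one_mul,
      zero_sub, neg_mul_neg] using h
  have hc12 : ∫ ω, (X ω).re * (Y ω).im ∂P = - ∫ ω, (X ω).im * (Y ω).re ∂P := by
    have h := rotInt (fun p => p.1.re * p.2.im)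
      ((Complex.measurable_re.comp measurable_fst).mul
        (Complex.measurable_im.comp measurable_snd))
    simp only [Complex.mul_re, Complex.mul_im, Complex.I_re, Complex.I_im, zero_mul,
      one_mul, zero_sub, zero_add, neg_mul] at h
    rw [integral_neg] at h
    linarith
  -- integrability of the complex product
  have iXabs4 : Integrable (fun ω => ‖X ω‖ ^ 4) P := integrable_pow4 hX4.norm
  have iYabs4 : Integrable (fun ω => ‖Y ω‖ ^ 4) P := integrable_pow4 hY4.norm
  have hXY_int : Integrable (fun ω => X ω * (starRingEnd ℂ) (Y ω)) P := by
    have hmeas : AEStronglyMeasurable (fun ω => X ω * (starRingEnd ℂ) (Y ω)) P :=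
      (hX.mul (continuous_star.measurable.comp hY)).aestronglyMeasurable
    refine Integrable.mono' ((integrable_const (1:ℝ)).add (iXabs4.add iYabs4)) hmeas ?_
    refine Filter.Eventually.of_forall fun ω => ?_
    have h1 : ‖X ω * (starRingEnd ℂ) (Y ω)‖ = ‖X ω‖ * ‖Y ω‖ := by
      rw [norm_mul, RCLike.norm_conj]
    rw [h1]
    calc ‖X ω‖ * ‖Y ω‖ = |‖X ω‖ ^ 1 * ‖Y ω‖ ^ 1| := by
          rw [pow_one, pow_one]
          exact (_root_.abs_of_nonneg (by positivity)).symm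
      _ ≤ 1 + (‖X ω‖ ^ 4 + ‖Y ω‖ ^ 4) := abs_monomial_le (by norm_num)
  -- real and imaginary parts of the complex integral
  have hreF : (fun ω => ((X ω * (starRingEnd ℂ) (Y ω)).re : ℝ))
      = fun ω => (X ω).re * (Y ω).re + (X ω).im * (Y ω).im := by
    funext ω
    simp [Complex.mul_re]
  have himF : (fun ω => ((X ω * (starRingEnd ℂ) (Y ω)).im : ℝ))
      = fun ω => (X ω).im * (Y ω).re - (X ω).re * (Y ω).im := by
    funext ω
    simp [Complex.mul_im]
    ring
  have i11 : Integrable (fun ω => (X ω).re * (Y ω).re) P := by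
    simpa using integrable_monomial mA1 mB1 1 1 (by norm_num)
  have i12 : Integrable (fun ω => (X ω).re * (Y ω).im) P := by
    simpa using integrable_monomial mA1 mB2 1 1 (by norm_num)
  have i21 : Integrable (fun ω => (X ω).im * (Y ω).re) P := by
    simpa using integrable_monomial mA2 mB1 1 1 (by norm_num)
  have i22 : Integrable (fun ω => (X ω).im * (Y ω).im) P := by
    simpa using integrable_monomial mA2 mB2 1 1 (by norm_num)
  have hRe : (∫ ω, X ω * (starRingEnd ℂ) (Y ω) ∂P).re
      = (∫ ω, (X ω).re * (Y ω).re ∂P) + ∫ ω, (X ω).im * (Y ω).im ∂P := by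
    have h := integral_re hXY_int
    simp only [RCLike.re_to_complex] at h
    rw [← h, hreF]
    exact integral_add i11 i22
  have hIm : (∫ ω, X ω * (starRingEnd ℂ) (Y ω) ∂P).im
      = (∫ ω, (X ω).im * (Y ω).re ∂P) - ∫ ω, (X ω).re * (Y ω).im ∂P := by
    have h := integral_im hXY_int
    simp only [RCLike.im_to_complex] at h
    rw [← h, himF]
    exact integral_sub i21 i12
  -- squared modulus identity for complex numbers
  have habs2 : ∀ z : ℂ, ‖z‖ ^ 2 = z.re ^ 2 + z.im ^ 2 := by
    intro z
    rw [Complex.sq_norm, Complex.normSq_apply]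
    ring
  -- expand left-hand side integrals
  have iM11 : Integrable (fun ω => (X ω).re ^ 2 * (Y ω).re ^ 2) P :=
    integrable_monomial mA1 mB1 2 2 (by norm_num)
  have iM12 : Integrable (fun ω => (X ω).re ^ 2 * (Y ω).im ^ 2) P :=
    integrable_monomial mA1 mB2 2 2 (by norm_num)
  have iM21 : Integrable (fun ω => (X ω).im ^ 2 * (Y ω).re ^ 2) P :=
    integrable_monomial mA2 mB1 2 2 (by norm_num)
  have iM22 : Integrable (fun ω => (X ω).im ^ 2 * (Y ω).im ^ 2) P :=
    integrable_monomial mA2 mB2 2 2 (by norm_num)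
  have iA1sq : Integrable (fun ω => (X ω).re ^ 2) P := by
    simpa using integrable_monomial mA1 mA2 2 0 (by norm_num)
  have iA2sq : Integrable (fun ω => (X ω).im ^ 2) P := by
    simpa using integrable_monomial mA2 mA1 2 0 (by norm_num)
  have iB1sq : Integrable (fun ω => (Y ω).re ^ 2) P := by
    simpa using integrable_monomial mB1 mB2 2 0 (by norm_num)
  have iB2sq : Integrable (fun ω => (Y ω).im ^ 2) P := by
    simpa using integrable_monomial mB2 mB1 2 0 (by norm_num)
  have L1 : ∫ ω, ‖X ω‖ ^ 2 * ‖Y ω‖ ^ 2 ∂P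
      = (∫ ω, (X ω).re ^ 2 * (Y ω).re ^ 2 ∂P) + (∫ ω, (X ω).re ^ 2 * (Y ω).im ^ 2 ∂P)
        + (∫ ω, (X ω).im ^ 2 * (Y ω).re ^ 2 ∂P)
        + (∫ ω, (X ω).im ^ 2 * (Y ω).im ^ 2 ∂P) := by
    have hfun : (fun ω => ‖X ω‖ ^ 2 * ‖Y ω‖ ^ 2)
        = fun ω => (X ω).re ^ 2 * (Y ω).re ^ 2 + (X ω).re ^ 2 * (Y ω).im ^ 2
          + (X ω).im ^ 2 * (Y ω).re ^ 2 + (X ω).im ^ 2 * (Y ω).im ^ 2 := by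
      funext ω
      rw [habs2, habs2]
      ring
    rw [hfun]
    exact integral_add4 iM11 iM12 iM21 iM22
  have L2 : ∫ ω, ‖X ω‖ ^ 2 ∂P
      = (∫ ω, (X ω).re ^ 2 ∂P) + ∫ ω, (X ω).im ^ 2 ∂P := by
    have hfun : (fun ω => ‖X ω‖ ^ 2)
        = fun ω => (X ω).re ^ 2 + (X ω).im ^ 2 := by
      funext ω; exact habs2 _
    rw [hfun]
    exact integral_add iA1sq iA2sq
  have L3 : ∫ ω, ‖Y ω‖ ^ 2 ∂P
      = (∫ ω, (Y ω).re ^ 2 ∂P) + ∫ ω, (Y ω).im ^ 2 ∂P := by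
    have hfun : (fun ω => ‖Y ω‖ ^ 2)
        = fun ω => (Y ω).re ^ 2 + (Y ω).im ^ 2 := by
      funext ω; exact habs2 _
    rw [hfun]
    exact integral_add iB1sq iB2sq
  rw [L1, L2, L3, habs2, hRe, hIm, hB11, hB12, hB21, hB22]
  linear_combination
    ((∫ ω, (X ω).im * (Y ω).im ∂P) - (∫ ω, (X ω).re * (Y ω).re ∂P)) * hc22
    + ((∫ ω, (X ω).im * (Y ω).re ∂P) + (∫ ω, (X ω).re * (Y ω).im ∂P)) * hc12
end
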